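/- If t : ℝⁿ → ℝⁿ is C¹ with symmetric Jacobian, then the Hessian of F(x) = Σᵢ ∫_0^{x_i} t_i(x_1,…,x_{i-1}, s, 0,…,0) ds equals the Jacobian of t: (HF(x))_{ab} = ∂t_a/∂x_b(x). -/

import Mathlib

open MeasureTheory

/-- The segmented-path potential: F(x) = ∑ i, ∫_0^{x i} t_i(x_1,…,x_{i-1}, s, 0,…,0) ds. -/
noncomputable def segPotential {n : ℕ} (t : (Fin n → ℝ) → (Fin n → ℝ)) (x : Fin n → ℝ) : ℝ :=
  ∑ i : Fin n, ∫ s in (0:ℝ)..(x i),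
    t (fun j => if j < i then x j else if j = i then s else 0) i

open MeasureTheory Metric Set Filter

namespace SegAux

variable {n : ℕ}

/-- The linear map `y ↦ (y₁,…,y_{i-1}, u yᵢ, 0,…,0)`. -/
noncomputable def Amap (i : Fin n) (u : ℝ) : (Fin n → ℝ) →L[ℝ] (Fin n → ℝ) :=
  ContinuousLinearMap.pi (fun j => if j < i then ContinuousLinearMap.proj j else 0)
  + u • ContinuousLinearMap.pi
      (fun j : Fin n => if j = i then ContinuousLinearMap.proj i else 0)

lemma Amap_apply (i : Fin n) (u : ℝ) (y : Fin n → ℝ) (j : Fin n) :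
    Amap i u y j = if j < i then y j else if j = i then u * y i else 0 := by
  simp only [Amap, ContinuousLinearMap.add_apply, ContinuousLinearMap.smul_apply,
    ContinuousLinearMap.pi_apply, Pi.add_apply, Pi.smul_apply, smul_eq_mul]
  rcases lt_trichotomy j i with h | h | h
  · simp [h, h.ne]
  · simp [h, lt_irrefl]
  · simp [h.ne', not_lt.mpr h.le, lt_asymm h]

lemma Amap_decomp (i : Fin n) (y : Fin n → ℝ) (u : ℝ) :
    Amap i u y = Amap i 0 y + u • (Pi.single i (y i) : Fin n → ℝ) := by
  funext j
  simp only [Pi.add_apply, Pi.smul_apply, Amap_apply, smul_eq_mul]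
  rcases lt_trichotomy j i with h | h | h
  · simp [h, Pi.single_apply, h.ne]
  · simp [h, lt_irrefl, Pi.single_apply]
  · simp [h.ne', not_lt.mpr h.le, Pi.single_apply]

lemma continuous_Amap (i : Fin n) : Continuous fun u : ℝ => Amap i u := by
  unfold Amap
  exact continuous_const.add (continuous_id.smul continuous_const)

lemma continuous_Amap_apply (i : Fin n) (y : Fin n → ℝ) :
    Continuous fun u : ℝ => Amap i u y :=
  ((continuous_Amap i).clm_apply continuous_const)

lemma hasDerivAt_Amap (i : Fin n) (y : Fin n → ℝ) (u : ℝ) :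
    HasDerivAt (fun u : ℝ => Amap i u y) ((Pi.single i (y i) : Fin n → ℝ)) u := by
  have h : (fun u : ℝ => Amap i u y) = fun u : ℝ => Amap i 0 y + u • (Pi.single i (y i) : Fin n → ℝ) := by
    funext u; exact Amap_decomp i y u
  rw [h]
  simpa using (hasDerivAt_const u (Amap i 0 y)).fun_add
    ((hasDerivAt_id u).smul_const ((Pi.single i (y i) : Fin n → ℝ)))

lemma norm_Amap_apply_le (i : Fin n) (u : ℝ) (y : Fin n → ℝ) :
    ‖Amap i u y‖ ≤ (1 + |u|) * ‖y‖ := by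
  have h0 : (0:ℝ) ≤ (1 + |u|) * ‖y‖ := by positivity
  rw [pi_norm_le_iff_of_nonneg h0]
  intro j
  rw [Amap_apply]
  have h1 : ‖y j‖ ≤ ‖y‖ := norm_le_pi_norm y j
  have h2 : ‖y i‖ ≤ ‖y‖ := norm_le_pi_norm y i
  split_ifs
  · nlinarith [abs_nonneg u, norm_nonneg y]
  · rw [Real.norm_eq_abs, abs_mul]
    nlinarith [abs_nonneg u, norm_nonneg y, abs_nonneg (y i),
      (Real.norm_eq_abs (y i)) ▸ h2]
  · simpa using h0

lemma norm_Amap_le (i : Fin n) (u : ℝ) : ‖Amap i u‖ ≤ 1 + |u| := by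
  refine ContinuousLinearMap.opNorm_le_bound _ (by positivity) fun y => ?_
  exact norm_Amap_apply_le i u y

lemma dist_Amap (i : Fin n) (u : ℝ) (y z : Fin n → ℝ) :
    dist (Amap i u y) (Amap i u z) ≤ (1 + |u|) * dist y z := by
  rw [dist_eq_norm, ← map_sub, dist_eq_norm]
  exact norm_Amap_apply_le i u (y - z)

lemma Amap_single_of_lt {a i : Fin n} (h : a < i) (u : ℝ) :
    Amap i u (Pi.single a 1) = (Pi.single a 1 : Fin n → ℝ) := by
  funext j
  rw [Amap_apply]
  rcases lt_trichotomy j i with hj | hj | hj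
  · simp [hj]
  · subst hj
    simp [lt_irrefl, Pi.single_apply, h.ne']
  · simp [hj.ne', not_lt.mpr hj.le, Pi.single_apply, (h.trans hj).ne']

lemma Amap_single_self (i : Fin n) (u : ℝ) :
    Amap i u (Pi.single i 1) = u • (Pi.single i 1 : Fin n → ℝ) := by
  funext j
  rw [Amap_apply]
  rcases lt_trichotomy j i with hj | hj | hj
  · simp [hj, Pi.single_apply, hj.ne]
  · subst hj; simp [lt_irrefl, Pi.single_apply]
  · simp [hj.ne', not_lt.mpr hj.le, Pi.single_apply]

lemma Amap_single_of_gt {a i : Fin n} (h : i < a) (u : ℝ) :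
    Amap i u (Pi.single a 1) = 0 := by
  funext j
  rw [Amap_apply]
  rcases lt_trichotomy j i with hj | hj | hj
  · simp [hj, Pi.single_apply, (hj.trans h).ne]
  · subst hj; simp [lt_irrefl, Pi.single_apply, h.ne']
  · simp [hj.ne', not_lt.mpr hj.le]

lemma Amap_one (i : Fin n) (y : Fin n → ℝ) :
    Amap i 1 y = fun j : Fin n => if (j:ℕ) < (i:ℕ) + 1 then y j else 0 := by
  funext j
  rw [Amap_apply]
  rcases lt_trichotomy j i with hj | hj | hj
  · rw [if_pos hj, if_pos (by omega : (j:ℕ) < (i:ℕ) + 1)]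
  · subst hj
    rw [if_neg (lt_irrefl _), if_pos rfl, if_pos (by omega : (j:ℕ) < (j:ℕ) + 1), one_mul]
  · have h1 : ¬ j < i := not_lt.mpr hj.le
    have h2 : j ≠ i := hj.ne'
    have h3 : ¬ ((j:ℕ) < (i:ℕ) + 1) := by
      have := (Fin.lt_iff_val_lt_val.mp hj); omega
    rw [if_neg h1, if_neg h2, if_neg h3]

lemma Amap_zero' (i : Fin n) (y : Fin n → ℝ) :
    Amap i 0 y = fun j : Fin n => if (j:ℕ) < (i:ℕ) then y j else 0 := by
  funext j
  rw [Amap_apply]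
  rcases lt_trichotomy j i with hj | hj | hj
  · rw [if_pos hj, if_pos (Fin.lt_iff_val_lt_val.mp hj)]
  · subst hj
    rw [if_neg (lt_irrefl _), if_pos rfl, if_neg (lt_irrefl _), zero_mul]
  · have h1 : ¬ j < i := not_lt.mpr hj.le
    have h3 : ¬ ((j:ℕ) < (i:ℕ)) := by
      have := (Fin.lt_iff_val_lt_val.mp hj); omega
    rw [if_neg h1, if_neg hj.ne', if_neg h3]

lemma norm_proj_le (i : Fin n) :
    ‖(ContinuousLinearMap.proj (R := ℝ) (φ := fun _ : Fin n => ℝ) i)‖ ≤ 1 :=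
  ContinuousLinearMap.opNorm_le_bound _ zero_le_one fun y => by
    rw [ContinuousLinearMap.proj_apply, one_mul]; exact norm_le_pi_norm y i

lemma single_smul_eq (i : Fin n) (c : ℝ) :
    (Pi.single i c : Fin n → ℝ) = c • (Pi.single i 1 : Fin n → ℝ) := by
  funext j
  simp [Pi.single_apply]

end SegAux

namespace SegAux
variable {n : ℕ}

lemma segPotential_eq (t : (Fin n → ℝ) → (Fin n → ℝ)) :
    segPotential t = fun z => ∑ i : Fin n, ∫ u in (0:ℝ)..1, z i * t (Amap i u z) i := by
  funext z
  unfold segPotential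
  refine Finset.sum_congr rfl fun i _ => ?_
  have h1 : ∫ u in (0:ℝ)..1, z i * t (Amap i u z) i
      = z i • ∫ u in (0:ℝ)..1, t (Amap i u z) i := by
    rw [← intervalIntegral.integral_smul]
    simp [smul_eq_mul]
  have h2 : (fun u : ℝ => t (Amap i u z) i)
      = fun u : ℝ => (fun s => t (fun j => if j < i then z j else if j = i then s else 0) i)
          (u * z i) := by
    funext u
    congr 1
    funext j
    rw [Amap_apply]
  rw [h1, h2, intervalIntegral.smul_integral_comp_mul_right
    (fun s => t (fun j => if j < i then z j else if j = i then s else 0) i) (z i)]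
  norm_num

end SegAux

open SegAux Metric Set Filter intervalIntegral


set_option maxHeartbeats 2000000 in
/-- The Hessian of the segmented-path potential equals the Jacobian of `t`:
`(HF(x))_{ab} = ∂t_a/∂x_b (x)`. -/
theorem hessian_of_segmented_path_potential {n : ℕ}
    (t : (Fin n → ℝ) → (Fin n → ℝ)) (U : Set (Fin n → ℝ))
    (hU_open : IsOpen U) (hU_convex : Convex ℝ U)
    (hU_orthant : {x : Fin n → ℝ | ∀ i, 0 ≤ x i} ⊆ U)
    (ht : ContDiffOn ℝ 1 t U)
    (hsym : ∀ x ∈ U, ∀ i j : Fin n,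
      fderiv ℝ (fun y => t y i) x (Pi.single j 1) =
      fderiv ℝ (fun y => t y j) x (Pi.single i 1)) :
    ∀ x : Fin n → ℝ, (∀ i, 0 ≤ x i) →
      ∀ a b : Fin n,
        fderiv ℝ (fun y => fderiv ℝ (segPotential t) y (Pi.single a 1)) x (Pi.single b 1) =
        fderiv ℝ (fun y => t y a) x (Pi.single b 1) := by
  intro x hx a b
  classical
  -- regularity facts
  have hdt : ∀ p ∈ U, DifferentiableAt ℝ t p := fun p hp =>
    (ht.differentiableOn one_ne_zero).differentiableAt (hU_open.mem_nhds hp)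
  have hdti : ∀ (i : Fin n), ∀ p ∈ U, DifferentiableAt ℝ (fun w => t w i) p := fun i p hp =>
    differentiableAt_pi.mp (hdt p hp) i
  have hfderiv_eq : ∀ (i : Fin n), ∀ p ∈ U, fderiv ℝ (fun w => t w i) p
      = (ContinuousLinearMap.proj i).comp (fderiv ℝ t p) := by
    intro i p hp
    have h := ((ContinuousLinearMap.proj (R := ℝ) (φ := fun _ : Fin n => ℝ)
      i).hasFDerivAt.comp p (hdt p hp).hasFDerivAt).fderiv
    simpa [Function.comp_def] using h
  have hcont_t : ContinuousOn t U := ht.continuousOn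
  have hcont_fderiv : ∀ i : Fin n,
      ContinuousOn (fun p => fderiv ℝ (fun w => t w i) p) U := by
    intro i
    have h1 : ContinuousOn (fun p => fderiv ℝ t p) U :=
      ht.continuousOn_fderiv_of_isOpen hU_open le_rfl
    have h2 : Continuous (fun L : (Fin n → ℝ) →L[ℝ] (Fin n → ℝ) =>
        (ContinuousLinearMap.proj (R := ℝ) (φ := fun _ : Fin n => ℝ) i).comp L) :=
      (ContinuousLinearMap.compSL (Fin n → ℝ) (Fin n → ℝ) ℝ (RingHom.id ℝ) (RingHom.id ℝ)
        (ContinuousLinearMap.proj i)).continuous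
    exact (h2.comp_continuousOn h1).congr (fun p hp => hfderiv_eq i p hp)
  -- compactness: a neighborhood of x all of whose path points lie in U
  have hK : IsCompact (⋃ i : Fin n, (fun u : ℝ => Amap i u x) '' Set.Icc (0:ℝ) 1) :=
    isCompact_iUnion fun i => isCompact_Icc.image (continuous_Amap_apply i x)
  have hKU : (⋃ i : Fin n, (fun u : ℝ => Amap i u x) '' Set.Icc (0:ℝ) 1) ⊆ U := by
    rintro p hp
    rw [Set.mem_iUnion] at hp
    obtain ⟨i, u, hu, rfl⟩ := hp
    apply hU_orthant
    intro j
    show (0:ℝ) ≤ Amap i u x j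
    rw [Amap_apply]
    split_ifs
    · exact hx j
    · exact mul_nonneg hu.1 (hx i)
    · exact le_refl 0
  obtain ⟨δ, δpos, hδU⟩ := hK.exists_thickening_subset_open hU_open hKU
  -- all path points of points near x are in U
  have hVU : ∀ y ∈ Metric.ball x (δ/2), ∀ (i : Fin n), ∀ u ∈ Set.Icc (0:ℝ) 1,
      Amap i u y ∈ U := by
    intro y hy i u hu
    apply hδU
    rw [Metric.mem_thickening_iff]
    refine ⟨Amap i u x, Set.mem_iUnion.2 ⟨i, u, hu, rfl⟩, ?_⟩
    have h1 := dist_Amap i u y x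
    have h2 : |u| ≤ 1 := abs_le.2 ⟨by linarith [hu.1], hu.2⟩
    have h3 : dist y x < δ/2 := mem_ball.mp hy
    have h4 : (0:ℝ) ≤ dist y x := dist_nonneg
    nlinarith
  -- gradient identity near x
  have hgrad : ∀ y ∈ Metric.ball x (δ/4),
      fderiv ℝ (segPotential t) y (Pi.single a 1) = t y a := by
    intro y hy
    have εpos : (0:ℝ) < δ/8 := by positivity
    have huIcc : Set.uIcc (0:ℝ) 1 = Set.Icc 0 1 := Set.uIcc_of_le zero_le_one
    have hsubset : Set.uIoc (0:ℝ) 1 ⊆ Set.Icc 0 1 := by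
      rw [Set.uIoc_of_le zero_le_one]; exact Set.Ioc_subset_Icc_self
    -- all path points of points in the closed ball around y lie in U
    have hball : ∀ z ∈ Metric.closedBall y (δ/8), ∀ (i : Fin n), ∀ u ∈ Set.Icc (0:ℝ) 1,
        Amap i u z ∈ U := by
      intro z hz i u hu
      refine hVU z ?_ i u hu
      have h1 := Metric.mem_closedBall.mp hz
      have h2 := Metric.mem_ball.mp hy
      rw [Metric.mem_ball]
      calc dist z x ≤ dist z y + dist y x := dist_triangle _ _ _
        _ < δ/2 := by linarith
    have hyball : y ∈ Metric.closedBall y (δ/8) := Metric.mem_closedBall_self (le_of_lt εpos)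
    -- the candidate derivative of each summand
    set Df : Fin n → (Fin n → ℝ) → ℝ → ((Fin n → ℝ) →L[ℝ] ℝ) := fun i z u =>
      z i • ((fderiv ℝ (fun w => t w i) (Amap i u z)).comp (Amap i u))
        + (t (Amap i u z) i) • (ContinuousLinearMap.proj i) with hDf
    -- continuity in u
    have hcontDf : ∀ (i : Fin n), ∀ z ∈ Metric.closedBall y (δ/8),
        ContinuousOn (fun u => Df i z u) (Set.Icc (0:ℝ) 1) := by
      intro i z hz
      have hA : Continuous fun u : ℝ => Amap i u z := continuous_Amap_apply i z
      have hmaps : Set.MapsTo (fun u : ℝ => Amap i u z) (Set.Icc 0 1) U :=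
        fun u hu => hball z hz i u hu
      have hct : ContinuousOn (fun u : ℝ => t (Amap i u z)) (Set.Icc 0 1) :=
        hcont_t.comp hA.continuousOn hmaps
      have hcti : ContinuousOn (fun u : ℝ => t (Amap i u z) i) (Set.Icc 0 1) :=
        (continuous_apply i).comp_continuousOn hct
      have hcf : ContinuousOn (fun u : ℝ => fderiv ℝ (fun w => t w i) (Amap i u z))
          (Set.Icc 0 1) := (hcont_fderiv i).comp hA.continuousOn hmaps
      have hcomp : ContinuousOn (fun u : ℝ =>
          (fderiv ℝ (fun w => t w i) (Amap i u z)).comp (Amap i u)) (Set.Icc 0 1) :=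
        hcf.clm_comp (continuous_Amap i).continuousOn
      exact (hcomp.const_smul (z i)).add (hcti.smul continuousOn_const)
    -- continuity of the integrand in u
    have hcontF : ∀ (i : Fin n), ∀ z ∈ Metric.closedBall y (δ/8),
        ContinuousOn (fun u : ℝ => z i * t (Amap i u z) i) (Set.Icc (0:ℝ) 1) := by
      intro i z hz
      have hA : Continuous fun u : ℝ => Amap i u z := continuous_Amap_apply i z
      have hmaps : Set.MapsTo (fun u : ℝ => Amap i u z) (Set.Icc 0 1) U :=
        fun u hu => hball z hz i u hu
      exact continuousOn_const.mul
        ((continuous_apply i).comp_continuousOn (hcont_t.comp hA.continuousOn hmaps))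
    -- derivative of each summand
    have h_i : ∀ i : Fin n, HasFDerivAt (fun z => ∫ u in (0:ℝ)..1, z i * t (Amap i u z) i)
        (∫ u in (0:ℝ)..1, Df i y u) y := by
      intro i
      -- bound on the compact set of path points
      have hcont2 : Continuous fun p : ℝ × (Fin n → ℝ) => Amap i p.1 p.2 :=
        ((continuous_Amap i).comp continuous_fst).clm_apply continuous_snd
      have hKc : IsCompact ((fun p : ℝ × (Fin n → ℝ) => Amap i p.1 p.2) ''
          (Set.Icc (0:ℝ) 1 ×ˢ Metric.closedBall y (δ/8))) :=
        (isCompact_Icc.prod (isCompact_closedBall _ _)).image hcont2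
      have hKiU : ((fun p : ℝ × (Fin n → ℝ) => Amap i p.1 p.2) ''
          (Set.Icc (0:ℝ) 1 ×ˢ Metric.closedBall y (δ/8))) ⊆ U := by
        rintro p ⟨⟨u, z⟩, ⟨hu, hz⟩, rfl⟩
        exact hball z hz i u hu
      obtain ⟨M1, hM1⟩ := hKc.exists_bound_of_continuousOn ((hcont_fderiv i).mono hKiU)
      obtain ⟨M2, hM2⟩ := hKc.exists_bound_of_continuousOn (hcont_t.mono hKiU)
      refine intervalIntegral.hasFDerivAt_integral_of_dominated_of_fderiv_le
        (bound := fun _ => (‖y‖ + δ/8) * (max M1 0 * 2) + max M2 0) (Metric.ball_mem_nhds y εpos) ?_ ?_ ?_ ?_ ?_ ?_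
      · filter_upwards [Metric.closedBall_mem_nhds y εpos] with z hz
        exact ((hcontF i z hz).mono hsubset).aestronglyMeasurable measurableSet_uIoc
      · apply ContinuousOn.intervalIntegrable
        rw [huIcc]; exact hcontF i y hyball
      · exact ((hcontDf i y hyball).mono hsubset).aestronglyMeasurable measurableSet_uIoc
      · refine MeasureTheory.ae_of_all _ fun u hu z hz => ?_
        have hu' : u ∈ Set.Icc (0:ℝ) 1 := hsubset hu
        have hz' : z ∈ Metric.closedBall y (δ/8) := Metric.ball_subset_closedBall hz
        have hKmem : Amap i u z ∈ (fun p : ℝ × (Fin n → ℝ) => Amap i p.1 p.2) ''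
            (Set.Icc (0:ℝ) 1 ×ˢ Metric.closedBall y (δ/8)) := ⟨(u, z), ⟨hu', hz'⟩, rfl⟩
        have hb1 : ‖fderiv ℝ (fun w => t w i) (Amap i u z)‖ ≤ max M1 0 :=
          le_trans (hM1 _ hKmem) (le_max_left _ _)
        have hb2 : ‖t (Amap i u z)‖ ≤ max M2 0 := le_trans (hM2 _ hKmem) (le_max_left _ _)
        have hb2' : |t (Amap i u z) i| ≤ max M2 0 :=
          le_trans (norm_le_pi_norm (t (Amap i u z)) i) hb2
        have hbA : ‖Amap i u‖ ≤ 2 := by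
          refine le_trans (norm_Amap_le i u) ?_
          have : |u| ≤ 1 := abs_le.2 ⟨by linarith [hu'.1], hu'.2⟩
          linarith
        have hbz : |z i| ≤ ‖y‖ + δ/8 := by
          have h1 : ‖z i‖ ≤ ‖z‖ := norm_le_pi_norm z i
          have h2 : ‖z‖ - ‖y‖ ≤ ‖z - y‖ := norm_sub_norm_le z y
          have h3 : ‖z - y‖ ≤ δ/8 := by
            rw [← dist_eq_norm]; exact Metric.mem_closedBall.mp hz'
          rw [Real.norm_eq_abs] at h1
          linarith
        have hc1 : ‖(fderiv ℝ (fun w => t w i) (Amap i u z)).comp (Amap i u)‖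
            ≤ max M1 0 * 2 := by
          refine le_trans (ContinuousLinearMap.opNorm_comp_le _ _) ?_
          have hA0 : (0:ℝ) ≤ ‖Amap i u‖ := norm_nonneg _
          have hM0 : (0:ℝ) ≤ max M1 0 := le_max_right _ _
          nlinarith [norm_nonneg (fderiv ℝ (fun w => t w i) (Amap i u z))]
        have hs1 : ‖z i • ((fderiv ℝ (fun w => t w i) (Amap i u z)).comp (Amap i u))‖
            ≤ (‖y‖ + δ/8) * (max M1 0 * 2) := by
          have h := norm_smul_le (z i)
            ((fderiv ℝ (fun w => t w i) (Amap i u z)).comp (Amap i u))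
          rw [Real.norm_eq_abs] at h
          exact le_trans h (mul_le_mul hbz hc1 (norm_nonneg _) (by positivity))
        have h0t : (0:ℝ) ≤ |t (Amap i u z) i| := abs_nonneg _
        have hs2 : ‖(t (Amap i u z) i) • (ContinuousLinearMap.proj (R := ℝ)
            (φ := fun _ : Fin n => ℝ) i)‖ ≤ max M2 0 := by
          have h := norm_smul_le (t (Amap i u z) i)
            (ContinuousLinearMap.proj (R := ℝ) (φ := fun _ : Fin n => ℝ) i)
          rw [Real.norm_eq_abs] at h
          refine le_trans h ?_
          calc |t (Amap i u z) i| * ‖(ContinuousLinearMap.proj (R := ℝ)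
              (φ := fun _ : Fin n => ℝ) i)‖
              ≤ max M2 0 * 1 :=
                mul_le_mul hb2' (norm_proj_le i) (norm_nonneg _) (le_trans h0t hb2')
            _ = max M2 0 := mul_one _
        simp only [hDf]
        exact le_trans (norm_add_le _ _) (add_le_add hs1 hs2)
      · exact intervalIntegrable_const
      · refine MeasureTheory.ae_of_all _ fun u hu z hz => ?_
        have hz' : z ∈ Metric.closedBall y (δ/8) := Metric.ball_subset_closedBall hz
        have hmem : Amap i u z ∈ U := hball z hz' i u (hsubset hu)
        have hc : HasFDerivAt (𝕜 := ℝ) (fun w : Fin n → ℝ => w i)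
            (ContinuousLinearMap.proj i) z := by
          exact (ContinuousLinearMap.proj (R := ℝ) (φ := fun _ : Fin n => ℝ) i).hasFDerivAt
        have hd : HasFDerivAt (fun w => t (Amap i u w) i)
            ((fderiv ℝ (fun w => t w i) (Amap i u z)).comp (Amap i u)) z := by
          have h1 := (hdti i _ hmem).hasFDerivAt.comp z (Amap i u).hasFDerivAt
          simpa [Function.comp_def] using h1
        exact hc.mul hd
    -- integrability of the derivative integrand
    have hF'_int : ∀ i : Fin n, IntervalIntegrable (fun u => Df i y u) volume 0 1 := by
      intro i
      apply ContinuousOn.intervalIntegrable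
      rw [huIcc]; exact hcontDf i y hyball
    -- assemble
    have h_sum : HasFDerivAt (segPotential t) (∑ i : Fin n, ∫ u in (0:ℝ)..1, Df i y u) y := by
      rw [segPotential_eq t]
      exact HasFDerivAt.fun_sum (fun i _ => h_i i)
    rw [h_sum.fderiv, ContinuousLinearMap.sum_apply]
    -- evaluate each term
    set T : ℕ → ℝ := fun k => t (fun j : Fin n => if (j:ℕ) < k then y j else 0) a with hT
    set S : ℕ → ℝ := fun k => if k ≤ (a:ℕ) then 0 else T k with hS
    have hyU : ∀ u ∈ Set.uIcc (0:ℝ) 1, ∀ i : Fin n, Amap i u y ∈ U := by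
      intro u hu i
      exact hball y hyball i u (huIcc ▸ hu)
    have hterm : ∀ i : Fin n,
        (∫ u in (0:ℝ)..1, Df i y u) (Pi.single a 1) = S ((i:ℕ)+1) - S (i:ℕ) := by
      intro i
      have happly : (∫ u in (0:ℝ)..1, Df i y u) (Pi.single a 1)
          = ∫ u in (0:ℝ)..1, (Df i y u) (Pi.single a 1) :=
        ContinuousLinearMap.intervalIntegral_apply (hF'_int i) _
      rw [happly]
      have hintDfa : IntervalIntegrable (fun u => (Df i y u) (Pi.single a 1)) volume 0 1 := by
        apply ContinuousOn.intervalIntegrable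
        rw [huIcc]
        exact (hcontDf i y hyball).clm_apply continuousOn_const
      rcases lt_trichotomy i a with hia | hia | hia
      · -- i < a : all terms vanish
        have hzero : ∀ u : ℝ, (Df i y u) (Pi.single a 1) = 0 := by
          intro u
          simp only [hDf, ContinuousLinearMap.add_apply, ContinuousLinearMap.smul_apply,
            ContinuousLinearMap.coe_comp', Function.comp_apply, ContinuousLinearMap.proj_apply,
            smul_eq_mul]
          rw [show (Amap i u) (Pi.single a 1) = 0 from Amap_single_of_gt hia u, map_zero,
            Pi.single_eq_of_ne hia.ne 1]
          ring
        calc (∫ u in (0:ℝ)..1, (Df i y u) (Pi.single a 1)) = ∫ _ in (0:ℝ)..1, (0:ℝ) := by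
              apply intervalIntegral.integral_congr
              intro u _
              exact hzero u
          _ = 0 := by simp
          _ = S ((i:ℕ)+1) - S (i:ℕ) := by
              have h0 : (i:ℕ) < (a:ℕ) := Fin.lt_iff_val_lt_val.mp hia
              have h1 : (i:ℕ)+1 ≤ (a:ℕ) := by omega
              have h2 : (i:ℕ) ≤ (a:ℕ) := by omega
              simp only [hS, if_pos h1, if_pos h2, sub_zero]
      · -- i = a
        subst hia
        have hg : ∀ u ∈ Set.uIcc (0:ℝ) 1,
            HasDerivAt (fun u => u * t (Amap i u y) i) ((Df i y u) (Pi.single i 1)) u := by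
          intro u hu
          have hmem : Amap i u y ∈ U := hyU u hu i
          have hinner : HasDerivAt (fun u => t (Amap i u y) i)
              ((fderiv ℝ (fun w => t w i) (Amap i u y))
                ((Pi.single i (y i) : Fin n → ℝ))) u := by
            have h1 := (hdti i _ hmem).hasFDerivAt.comp_hasDerivAt u (hasDerivAt_Amap i y u)
            simpa [Function.comp_def] using h1
          have hprod := (hasDerivAt_id' (x := u)).fun_mul hinner
          refine hprod.congr_deriv ?_
          symm
          simp only [hDf, ContinuousLinearMap.add_apply, ContinuousLinearMap.smul_apply,
            ContinuousLinearMap.coe_comp', Function.comp_apply, ContinuousLinearMap.proj_apply,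
            smul_eq_mul]
          rw [Amap_single_self, ContinuousLinearMap.map_smul, Pi.single_eq_same,
            single_smul_eq i (y i), ContinuousLinearMap.map_smul]
          simp only [smul_eq_mul]
          ring
        rw [intervalIntegral.integral_eq_sub_of_hasDerivAt hg hintDfa]
        have hS1 : S ((i:ℕ)+1) = T ((i:ℕ)+1) := by
          simp only [hS, if_neg (by omega : ¬ ((i:ℕ)+1 ≤ (i:ℕ)))]
        have hS0 : S (i:ℕ) = 0 := by simp only [hS, if_pos (le_refl (i:ℕ))]
        rw [hS1, hS0, sub_zero]
        show (1:ℝ) * t (Amap i 1 y) i - 0 * t (Amap i 0 y) i = T ((i:ℕ)+1)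
        rw [Amap_one]
        simp only [hT]
        ring
      · -- a < i
        have hg : ∀ u ∈ Set.uIcc (0:ℝ) 1,
            HasDerivAt (fun u => t (Amap i u y) a) ((Df i y u) (Pi.single a 1)) u := by
          intro u hu
          have hmem : Amap i u y ∈ U := hyU u hu i
          have hinner : HasDerivAt (fun u => t (Amap i u y) a)
              ((fderiv ℝ (fun w => t w a) (Amap i u y))
                ((Pi.single i (y i) : Fin n → ℝ))) u := by
            have h1 := (hdti a _ hmem).hasFDerivAt.comp_hasDerivAt u (hasDerivAt_Amap i y u)
            simpa [Function.comp_def] using h1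
          convert hinner using 1
          simp only [hDf, ContinuousLinearMap.add_apply, ContinuousLinearMap.smul_apply,
            ContinuousLinearMap.coe_comp', Function.comp_apply, ContinuousLinearMap.proj_apply,
            smul_eq_mul]
          rw [Amap_single_of_lt hia, Pi.single_eq_of_ne hia.ne' 1, mul_zero, add_zero,
            hsym _ hmem i a, single_smul_eq i (y i), ContinuousLinearMap.map_smul]
          simp only [smul_eq_mul]
        rw [intervalIntegral.integral_eq_sub_of_hasDerivAt hg hintDfa]
        have h0 : (a:ℕ) < (i:ℕ) := Fin.lt_iff_val_lt_val.mp hia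
        have hS1 : S ((i:ℕ)+1) = T ((i:ℕ)+1) := by
          simp only [hS, if_neg (by omega : ¬ ((i:ℕ)+1 ≤ (a:ℕ)))]
        have hS0 : S (i:ℕ) = T (i:ℕ) := by
          simp only [hS, if_neg (by omega : ¬ ((i:ℕ) ≤ (a:ℕ)))]
        rw [hS1, hS0]
        show t (Amap i 1 y) a - t (Amap i 0 y) a = T ((i:ℕ)+1) - T (i:ℕ)
        rw [Amap_one, Amap_zero']
    calc ∑ i : Fin n, (∫ u in (0:ℝ)..1, Df i y u) (Pi.single a 1)
        = ∑ i : Fin n, (S ((i:ℕ)+1) - S (i:ℕ)) := Finset.sum_congr rfl fun i _ => hterm i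
      _ = ∑ k ∈ Finset.range n, (S (k+1) - S k) :=
          Fin.sum_univ_eq_sum_range (fun k => S (k+1) - S k) n
      _ = S n - S 0 := Finset.sum_range_sub S n
      _ = t y a := by
          have h1 : ¬ (n ≤ (a:ℕ)) := not_le.mpr a.isLt
          have h2 : (fun j : Fin n => if (j:ℕ) < n then y j else 0) = y :=
            funext fun j => if_pos j.isLt
          simp only [hS, if_neg h1, if_pos (Nat.zero_le _), sub_zero, hT, h2]
  -- conclude
  have heq : (fun y => fderiv ℝ (segPotential t) y (Pi.single a 1)) =ᶠ[nhds x]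
      fun y => t y a := by
    filter_upwards [Metric.ball_mem_nhds x (by positivity : (0:ℝ) < δ/4)] with y hy
    exact hgrad y hy
  rw [heq.fderiv_eq]
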